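/- Let $V$ be a vector space over $\mathbb{Q}$, $n\ge 1$, and let $\lambda_0,\dots,\lambda_{n+1}\in V$ with $\lambda(k)=\sum_{i=0}^{n+1}\binom{k}{i}\lambda_i$, let $p(k)=a_0k^n+a_1k^{n-1}+\cdots+a_n$ with $a_i\in\mathbb{Q}$, $a_0>0$, and $\mu=2a_1/a_0$. Let $\sigma\in V$ and suppose $\lambda'_0,\dots,\lambda'_{n+1}\in V$ satisfy $\sum_{i=0}^{n+1}\binom{k}{i}\lambda'_i=\lambda(k)+k\,p(k)\,\sigma$ for all integers $k\ge 0$. Then $(\mu+n(n+1))\lambda'_{n+1}-2(n+1)\lambda'_n=(\mu+n(n+1))\lambda_{n+1}-2(n+1)\lambda_n$. -/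

import Mathlib

open Polynomial Finset Nat

private lemma poly_eq_of_nat_eval (p q : Polynomial ℚ)
    (h : ∀ k : ℕ, p.eval (k : ℚ) = q.eval (k : ℚ)) : p = q := by
  rw [← sub_eq_zero]
  apply Polynomial.eq_zero_of_infinite_isRoot
  apply (Set.infinite_range_of_injective (Nat.cast_injective : Function.Injective (Nat.cast : ℕ → ℚ))).mono
  rintro x ⟨k, rfl⟩
  simp [Polynomial.IsRoot, h k]

private lemma poch_coeff (m : ℕ) :
    (descPochhammer ℚ (m+1)).coeff m = -(m*(m+1)/2) := by
  induction m with
  | zero => simp [descPochhammer_one]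
  | succ m ih =>
    have h1 : (descPochhammer ℚ (m+1)).coeff (m+1) = 1 := by
      have := (monic_descPochhammer ℚ (m+1)).coeff_natDegree
      rwa [descPochhammer_natDegree] at this
    rw [descPochhammer_succ_right, mul_sub, coeff_sub, coeff_mul_X, ← C_eq_natCast,
      coeff_mul_C, ih, h1]
    push_cast
    ring

private lemma poch_coeff_self (m : ℕ) : (descPochhammer ℚ m).coeff m = 1 := by
  have := (monic_descPochhammer ℚ m).coeff_natDegree
  rwa [descPochhammer_natDegree] at this

private lemma poch_coeff_lt {i m : ℕ} (h : i < m) : (descPochhammer ℚ i).coeff m = 0 := by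
  apply coeff_eq_zero_of_natDegree_lt
  rwa [descPochhammer_natDegree]

private lemma key (m : ℕ) (x x' : ℕ → ℚ) (a : ℕ → ℚ) (s : ℚ)
    (h : ∀ k : ℕ, ∑ i ∈ range (m+3), (k.choose i : ℚ) * x' i
        = ∑ i ∈ range (m+3), (k.choose i : ℚ) * x i
          + ((k : ℚ) * ∑ i ∈ range (m+2), a i * (k:ℚ)^(m+1-i)) * s) :
    x' (m+2) = x (m+2) + (m + 2) ! * a 0 * s ∧
    2 * x' (m+1) = 2 * x (m+1) + 2 * (m + 1) ! * a 1 * s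
        + (m + 1) ! * ((m+1)*(m+2)) * a 0 * s := by
  set P : Polynomial ℚ := ∑ i ∈ range (m+3), C (x' i / i !) * descPochhammer ℚ i with hP
  set Q : Polynomial ℚ := (∑ i ∈ range (m+3), C (x i / i !) * descPochhammer ℚ i)
      + (X * ∑ i ∈ range (m+2), C (a i) * X^(m+1-i)) * C s with hQ
  have he : ∀ (y : ℕ → ℚ) (k : ℕ),
      eval (k:ℚ) (∑ i ∈ range (m+3), C (y i / i !) * descPochhammer ℚ i)
        = ∑ i ∈ range (m+3), (k.choose i : ℚ) * y i := by
    intro y k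
    rw [eval_finset_sum]
    refine Finset.sum_congr rfl fun i _ => ?_
    rw [eval_mul, eval_C, descPochhammer_eval_eq_descFactorial,
      Nat.descFactorial_eq_factorial_mul_choose]
    have : (i ! : ℚ) ≠ 0 := by exact_mod_cast i.factorial_ne_zero
    push_cast
    field_simp
  have hPQ : P = Q := by
    apply poly_eq_of_nat_eval
    intro k
    rw [hP, hQ, he x' k]
    rw [eval_add, he x k, h k]
    congr 1
    simp [eval_finset_sum]
  have hsumc : ∀ (y : ℕ → ℚ) (j : ℕ),
      (∑ i ∈ range (m+3), C (y i / i !) * descPochhammer ℚ i).coeff j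
        = ∑ i ∈ range (m+3), (y i / i !) * (descPochhammer ℚ i).coeff j := by
    intro y j
    rw [finset_sum_coeff]
    exact Finset.sum_congr rfl fun i _ => by rw [coeff_C_mul]
  have hc2 : ∀ y : ℕ → ℚ,
      (∑ i ∈ range (m+3), C (y i / i !) * descPochhammer ℚ i).coeff (m+2)
        = y (m+2) / (m + 2) ! := by
    intro y
    rw [hsumc]
    rw [Finset.sum_eq_single (m+2)]
    · rw [poch_coeff_self]; ring
    · intro i hi hne
      simp only [Finset.mem_range] at hi
      rw [poch_coeff_lt (by omega), mul_zero]
    · intro hmem; exact absurd (Finset.self_mem_range_succ _) hmem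
  have hc1 : ∀ y : ℕ → ℚ,
      (∑ i ∈ range (m+3), C (y i / i !) * descPochhammer ℚ i).coeff (m+1)
        = y (m+1) / (m + 1) ! + y (m+2) / (m + 2) ! * (-((m+1)*(m+2)/2)) := by
    intro y
    rw [hsumc, Finset.sum_range_succ, Finset.sum_range_succ]
    rw [Finset.sum_eq_zero (fun i hi => by
      simp only [Finset.mem_range] at hi
      rw [poch_coeff_lt (by omega), mul_zero])]
    rw [poch_coeff_self (m+1), poch_coeff (m+1)]
    push_cast
    ring
  -- coefficients of the twist polynomial
  have hS2 : (∑ i ∈ range (m+2), C (a i) * X^(m+1-i) : Polynomial ℚ).coeff (m+1) = a 0 := by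
    rw [finset_sum_coeff]
    rw [Finset.sum_eq_single 0]
    · simp
    · intro i hi hne
      simp only [Finset.mem_range] at hi
      rw [coeff_C_mul, coeff_X_pow, if_neg (by omega), mul_zero]
    · intro hmem; simp at hmem
  have hS1 : (∑ i ∈ range (m+2), C (a i) * X^(m+1-i) : Polynomial ℚ).coeff m = a 1 := by
    rw [finset_sum_coeff]
    rw [Finset.sum_eq_single 1]
    · simp
    · intro i hi hne
      simp only [Finset.mem_range] at hi
      rw [coeff_C_mul, coeff_X_pow, if_neg (by omega), mul_zero]
    · intro hmem; simp at hmem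
  have e1 : P.coeff (m+2) = Q.coeff (m+2) := by rw [hPQ]
  have e2 : P.coeff (m+1) = Q.coeff (m+1) := by rw [hPQ]
  rw [hP, hQ, hc2, coeff_add, hc2, coeff_mul_C, coeff_X_mul, hS2] at e1
  rw [hP, hQ, hc1, coeff_add, hc1, coeff_mul_C, coeff_X_mul, hS1] at e2
  have hf1 : ((m + 1) ! : ℚ) ≠ 0 := by exact_mod_cast (m+1).factorial_ne_zero
  have hf2 : ((m + 2) ! : ℚ) ≠ 0 := by exact_mod_cast (m+2).factorial_ne_zero
  have hrel : ((m + 2) ! : ℚ) = (m+2) * (m + 1) ! := by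
    rw [Nat.factorial_succ (m+1)]; push_cast; ring
  constructor
  · field_simp at e1
    linear_combination e1
  · rw [hrel] at e1 e2
    have hm2 : ((m:ℚ)+2) ≠ 0 := by positivity
    field_simp at e1 e2
    apply mul_left_cancel₀ (mul_ne_zero hm2 hf1)
    linear_combination ((m:ℚ)+2) * (((m + 1) !) : ℚ) * e2
      + ((m:ℚ)+2) * (((m + 1) !) : ℚ) * ((m:ℚ)+1) * e1

/-- Rigidity of the CM line (Corollary 4.5 of Fine–Ross):
`λ_CM(X, L ⊗ π*σ) = λ_CM(X, L)`. -/
theorem cm_rigid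
    (V : Type*) [AddCommGroup V] [Module ℚ V]
    (n : ℕ) (hn : 1 ≤ n)
    (lam : ℕ → V)
    (Lam : ℕ → V)
    (hLam : ∀ k : ℕ, Lam k = ∑ i ∈ Finset.range (n + 2), ((k.choose i : ℚ)) • lam i)
    (a : ℕ → ℚ) (ha0 : 0 < a 0)
    (p : ℕ → ℚ)
    (hp : ∀ k : ℕ, p k = ∑ i ∈ Finset.range (n + 1), a i * (k : ℚ) ^ (n - i))
    (μ : ℚ) (hμ : μ = 2 * a 1 / a 0)
    (σ : V)
    (lam' : ℕ → V)
    (hlam' : ∀ k : ℕ,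
      ∑ i ∈ Finset.range (n + 2), ((k.choose i : ℚ)) • lam' i
        = Lam k + ((k : ℚ) * p k) • σ) :
    (μ + n * (n + 1)) • lam' (n + 1) - ((2 * (n + 1) : ℚ)) • lam' n
      = (μ + n * (n + 1)) • lam (n + 1) - ((2 * (n + 1) : ℚ)) • lam n := by
  obtain ⟨m, hm⟩ : ∃ m, n = m + 1 := ⟨n - 1, by omega⟩
  subst hm
  rw [← sub_eq_zero, ← Module.forall_dual_apply_eq_zero_iff ℚ]
  intro f
  have h : ∀ k : ℕ, ∑ i ∈ Finset.range (m+3), (k.choose i : ℚ) * f (lam' i)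
      = ∑ i ∈ Finset.range (m+3), (k.choose i : ℚ) * f (lam i)
        + ((k : ℚ) * ∑ i ∈ Finset.range (m+2), a i * (k:ℚ)^(m+1-i)) * f σ := by
    intro k
    have h1 := congrArg f (hlam' k)
    rw [hLam k, hp k] at h1
    show _ = _ + ((k : ℚ) * ∑ i ∈ Finset.range (m+1+1), a i * (k:ℚ)^(m+1-i)) * f σ
    simpa [map_sum, map_smul, smul_eq_mul] using h1
  obtain ⟨H1, H2⟩ := key m (fun i => f (lam i)) (fun i => f (lam' i)) a (f σ) h
  have hrel : (((m + 2) !) : ℚ) = (m+2) * (m + 1) ! := by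
    rw [Nat.factorial_succ (m+1)]; push_cast; ring
  have ha0' : a 0 ≠ 0 := ne_of_gt ha0
  simp only [map_sub, map_smul, smul_eq_mul]
  rw [hμ]
  field_simp
  push_cast
  linear_combination (a 0 * (((m:ℚ)+1)*((m:ℚ)+2)) + 2 * a 1) * H1
    - ((m:ℚ)+2) * a 0 * H2
    + (a 0 * (((m:ℚ)+1)*((m:ℚ)+2)) + 2 * a 1) * a 0 * f σ * hrel
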